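/- A C² curve (x₁, x₂) : ℝ → ℝ² satisfies the pendulum geometric dynamics d²x₁/dt² = x₁ − 2 dx₂/dt, d²x₂/dt² = x₂ + 2 dx₁/dt if and only if there exist constants b₁, b₂, b₃, b₄ ∈ ℝ such that x₁(t) = b₁ cos t + b₂ sin t + b₃ t cos t + b₄ t sin t and x₂(t) = b₁ sin t − b₂ cos t + b₃ t sin t − b₄ t cos t for all t ∈ ℝ (a family of spirals). -/

import Mathlib

private lemma pend_affine (f g : ℝ → ℝ) (hf : ∀ t, HasDerivAt f (g t) t)
    (hg : ∀ t, HasDerivAt g 0 t) : ∀ t, f t = f 0 + g 0 * t := by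
  intro t
  have h : ∀ s : ℝ, HasDerivAt (fun s => f s - g 0 * s) 0 s := by
    intro s
    have hgc : g s = g 0 :=
      is_const_of_deriv_eq_zero (fun x => (hg x).differentiableAt)
        (fun x => (hg x).deriv) s 0
    have := (hf s).sub ((hasDerivAt_id s).const_mul (g 0))
    rw [hgc, mul_one, sub_self] at this
    exact this
  have hc := is_const_of_deriv_eq_zero (f := fun s => f s - g 0 * s)
      (fun x => (h x).differentiableAt) (fun x => (h x).deriv) t 0
  linarith

private lemma pend_spiral_deriv (a b c d t : ℝ) :
    HasDerivAt (fun s => (a + b*s) * Real.cos s + (c + d*s) * Real.sin s)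
      (((c+b) + d*t) * Real.cos t + ((d-a) + (-b)*t) * Real.sin t) t := by
  have h1 : HasDerivAt (fun s : ℝ => a + b*s) b t := by
    exact ((hasDerivAt_const t a).add ((hasDerivAt_id t).const_mul b)).congr_deriv (by ring)
  have h2 : HasDerivAt (fun s : ℝ => c + d*s) d t := by
    exact ((hasDerivAt_const t c).add ((hasDerivAt_id t).const_mul d)).congr_deriv (by ring)
  have := (h1.mul (Real.hasDerivAt_cos t)).add (h2.mul (Real.hasDerivAt_sin t))
  exact this.congr_deriv (by ring)

/-- A C² curve `(x₁, x₂) : ℝ → ℝ²` satisfies the pendulum geometric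
dynamics `x₁'' = x₁ - 2 x₂'`, `x₂'' = x₂ + 2 x₁'` iff there are constants
`b₁, b₂, b₃, b₄` with `x₁ t = b₁ cos t + b₂ sin t + b₃ t cos t + b₄ t sin t` and
`x₂ t = b₁ sin t - b₂ cos t + b₃ t sin t - b₄ t cos t` (a family of spirals). -/
theorem pendulum_geometric_dynamics_solutions
    (x₁ x₂ : ℝ → ℝ) (h₁ : ContDiff ℝ 2 x₁) (h₂ : ContDiff ℝ 2 x₂) :
    (∀ t : ℝ, deriv (deriv x₁) t = x₁ t - 2 * deriv x₂ t ∧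
        deriv (deriv x₂) t = x₂ t + 2 * deriv x₁ t) ↔
      ∃ b₁ b₂ b₃ b₄ : ℝ, ∀ t : ℝ,
        x₁ t = b₁ * Real.cos t + b₂ * Real.sin t
          + b₃ * t * Real.cos t + b₄ * t * Real.sin t ∧
        x₂ t = b₁ * Real.sin t - b₂ * Real.cos t
          + b₃ * t * Real.sin t - b₄ * t * Real.cos t := by
  constructor
  · intro hyp
    -- C¹ data
    have hc₁ : ContDiff ℝ 1 (deriv x₁) :=
      ((contDiff_succ_iff_deriv (n := 1)).mp (by exact_mod_cast h₁)).2.2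
    have hc₂ : ContDiff ℝ 1 (deriv x₂) :=
      ((contDiff_succ_iff_deriv (n := 1)).mp (by exact_mod_cast h₂)).2.2
    have hx₁ : ∀ t, HasDerivAt x₁ (deriv x₁ t) t := fun t =>
      ((h₁.differentiable (by norm_num)) t).hasDerivAt
    have hx₂ : ∀ t, HasDerivAt x₂ (deriv x₂ t) t := fun t =>
      ((h₂.differentiable (by norm_num)) t).hasDerivAt
    have hdx₁ : ∀ t, HasDerivAt (deriv x₁) (deriv (deriv x₁) t) t := fun t =>
      ((hc₁.differentiable one_ne_zero) t).hasDerivAt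
    have hdx₂ : ∀ t, HasDerivAt (deriv x₂) (deriv (deriv x₂) t) t := fun t =>
      ((hc₂.differentiable one_ne_zero) t).hasDerivAt
    -- rotated coordinates u, v with derivatives gu, gv
    set u : ℝ → ℝ := fun t => x₁ t * Real.cos t + x₂ t * Real.sin t with hu_def
    set v : ℝ → ℝ := fun t => -(x₁ t) * Real.sin t + x₂ t * Real.cos t with hv_def
    set gu : ℝ → ℝ := fun t =>
      deriv x₁ t * Real.cos t - x₁ t * Real.sin t
        + deriv x₂ t * Real.sin t + x₂ t * Real.cos t with hgu_def
    set gv : ℝ → ℝ := fun t =>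
      -(deriv x₁ t) * Real.sin t - x₁ t * Real.cos t
        + deriv x₂ t * Real.cos t - x₂ t * Real.sin t with hgv_def
    have hu : ∀ t, HasDerivAt u (gu t) t := by
      intro t
      have := ((hx₁ t).mul (Real.hasDerivAt_cos t)).add
        ((hx₂ t).mul (Real.hasDerivAt_sin t))
      refine this.congr_deriv ?_; simp only [hgu_def]; ring
    have hv : ∀ t, HasDerivAt v (gv t) t := by
      intro t
      have := (((hx₁ t).neg).mul (Real.hasDerivAt_sin t)).add
        ((hx₂ t).mul (Real.hasDerivAt_cos t))
      refine this.congr_deriv ?_; simp only [hgv_def, Pi.neg_apply]; ring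
    have hgu : ∀ t, HasDerivAt gu 0 t := by
      intro t
      have := ((((hdx₁ t).mul (Real.hasDerivAt_cos t)).sub
        ((hx₁ t).mul (Real.hasDerivAt_sin t))).add
        ((hdx₂ t).mul (Real.hasDerivAt_sin t))).add
        ((hx₂ t).mul (Real.hasDerivAt_cos t))
      refine this.congr_deriv ?_
      rw [(hyp t).1, (hyp t).2]; ring
    have hgv : ∀ t, HasDerivAt gv 0 t := by
      intro t
      have := ((((hdx₁ t).neg.mul (Real.hasDerivAt_sin t)).sub
        ((hx₁ t).mul (Real.hasDerivAt_cos t))).add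
        ((hdx₂ t).mul (Real.hasDerivAt_cos t))).sub
        ((hx₂ t).mul (Real.hasDerivAt_sin t))
      refine this.congr_deriv ?_
      rw [(hyp t).1, (hyp t).2, Pi.neg_apply]; ring
    have hU := pend_affine u gu hu hgu
    have hV := pend_affine v gv hv hgv
    refine ⟨x₁ 0, -(x₂ 0), deriv x₁ 0 + x₂ 0, x₁ 0 - deriv x₂ 0, fun t => ?_⟩
    have e1 := hU t
    have e2 := hV t
    simp only [hu_def, hv_def, hgu_def, hgv_def, Real.cos_zero, Real.sin_zero,
      mul_one, mul_zero, add_zero, zero_add, sub_zero, neg_mul] at e1 e2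
    have hpy := Real.sin_sq_add_cos_sq t
    constructor
    · linear_combination Real.cos t * e1 - Real.sin t * e2 - x₁ t * hpy
    · linear_combination Real.sin t * e1 + Real.cos t * e2 - x₂ t * hpy
  · rintro ⟨b₁, b₂, b₃, b₄, hb⟩
    have hx₁ : x₁ = fun s => (b₁ + b₃*s) * Real.cos s + (b₂ + b₄*s) * Real.sin s :=
      funext fun s => by rw [(hb s).1]; ring
    have hx₂ : x₂ = fun s => (-b₂ + -b₄*s) * Real.cos s + (b₁ + b₃*s) * Real.sin s :=
      funext fun s => by rw [(hb s).2]; ring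
    have hd₁ : deriv x₁ = fun s =>
        ((b₂+b₃) + b₄*s) * Real.cos s + ((b₄-b₁) + (-b₃)*s) * Real.sin s :=
      funext fun s => by rw [hx₁]; exact (pend_spiral_deriv b₁ b₃ b₂ b₄ s).deriv
    have hd₂ : deriv x₂ = fun s =>
        ((b₁ + -b₄) + b₃*s) * Real.cos s + ((b₃+b₂) + (b₄)*s) * Real.sin s :=
      funext fun s => by
        rw [hx₂]
        have := (pend_spiral_deriv (-b₂) (-b₄) b₁ b₃ s).deriv
        rw [this]; ring
    have hdd₁ : ∀ t, deriv (deriv x₁) t =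
        ((b₄-b₁)+b₄ + (-b₃)*t) * Real.cos t
          + (((-b₃)-(b₂+b₃)) + (-b₄)*t) * Real.sin t := fun t => by
      rw [hd₁]
      exact (pend_spiral_deriv (b₂+b₃) b₄ (b₄-b₁) (-b₃) t).deriv
    have hdd₂ : ∀ t, deriv (deriv x₂) t =
        (((b₃+b₂)+b₃) + b₄*t) * Real.cos t
          + ((b₄-(b₁ + -b₄)) + (-b₃)*t) * Real.sin t := fun t => by
      rw [hd₂]
      exact (pend_spiral_deriv (b₁ + -b₄) b₃ (b₃+b₂) b₄ t).deriv
    intro t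
    constructor
    · rw [hdd₁ t, (hb t).1, hd₂]; ring
    · rw [hdd₂ t, (hb t).2, hd₁]; ring
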